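/- Let (V, w) be an irreducible Whittaker module over R(f) with cyclic Whittaker vector w. Then the set {H^i w : i ≥ 0} is a ℂ-vector space basis of V. -/

import Mathlib

open Polynomial

inductive SmithGen : Type
  | E | F | H

open SmithGen in
inductive SmithRel (f : ℂ[X]) : FreeAlgebra ℂ SmithGen → FreeAlgebra ℂ SmithGen → Prop
  | ef : SmithRel f (FreeAlgebra.ι ℂ E * FreeAlgebra.ι ℂ F - FreeAlgebra.ι ℂ F * FreeAlgebra.ι ℂ E)
      (aeval (FreeAlgebra.ι ℂ H) f)
  | he : SmithRel f (FreeAlgebra.ι ℂ H * FreeAlgebra.ι ℂ E - FreeAlgebra.ι ℂ E * FreeAlgebra.ι ℂ H)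
      (FreeAlgebra.ι ℂ E)
  | hf : SmithRel f (FreeAlgebra.ι ℂ H * FreeAlgebra.ι ℂ F - FreeAlgebra.ι ℂ F * FreeAlgebra.ι ℂ H)
      (-FreeAlgebra.ι ℂ F)

/-- Smith's algebra `R(f)`, similar to `U(sl₂)`. -/
abbrev SmithAlgebra (f : ℂ[X]) : Type := RingQuot (SmithRel f)

noncomputable def SmithE (f : ℂ[X]) : SmithAlgebra f :=
  RingQuot.mkAlgHom ℂ (SmithRel f) (FreeAlgebra.ι ℂ SmithGen.E)

noncomputable def SmithF (f : ℂ[X]) : SmithAlgebra f :=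
  RingQuot.mkAlgHom ℂ (SmithRel f) (FreeAlgebra.ι ℂ SmithGen.F)

noncomputable def SmithH (f : ℂ[X]) : SmithAlgebra f :=
  RingQuot.mkAlgHom ℂ (SmithRel f) (FreeAlgebra.ι ℂ SmithGen.H)

/-- The Casimir element `Ω = 2FE + u(H+1)`. -/
noncomputable def SmithOmega (f u : ℂ[X]) : SmithAlgebra f :=
  2 * SmithF f * SmithE f + aeval (SmithH f) (u.comp (X + 1))

namespace SmithAux

lemma poch_delta (n : ℕ) :
    ascPochhammer ℂ (n + 1) - (ascPochhammer ℂ (n + 1)).comp (X - C 1)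
      = C ((n : ℂ) + 1) * ascPochhammer ℂ n := by
  have h1 : (ascPochhammer ℂ (n + 1)).comp (X - C 1) = (X - C 1) * ascPochhammer ℂ n := by
    rw [ascPochhammer_succ_left, mul_comp, X_comp, comp_assoc]
    congr 2
    rw [add_comp, X_comp, one_comp]
    ring_nf
    simp
  have h2 : (C ((n : ℂ) + 1) : ℂ[X]) = (n : ℂ[X]) + 1 := by rw [map_add, C_eq_natCast, map_one]
  rw [h1, ascPochhammer_succ_right, h2, C_1]
  ring

lemma exists_delta (p : ℂ[X]) : ∃ g : ℂ[X], g - g.comp (X - C 1) = p := by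
  by_cases hp : p = 0
  · exact ⟨0, by simp [hp]⟩
  generalize hn : p.natDegree = n
  induction n using Nat.strong_induction_on generalizing p with
  | _ n ih =>
    set a := p.leadingCoeff with ha
    have ha0 : a ≠ 0 := leadingCoeff_ne_zero.mpr hp
    have hn1 : ((n : ℂ) + 1) ≠ 0 := Nat.cast_add_one_ne_zero n
    have hd1 : (C (a / ((n : ℂ) + 1)) * ascPochhammer ℂ (n + 1))
        - (C (a / ((n : ℂ) + 1)) * ascPochhammer ℂ (n + 1)).comp (X - C 1)
        = C a * ascPochhammer ℂ n := by
      rw [mul_comp, C_comp, ← mul_sub, poch_delta, ← mul_assoc, ← C_mul,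
        div_mul_cancel₀ _ hn1]
    have hmon : (ascPochhammer ℂ n).Monic := monic_ascPochhammer ℂ n
    have hpochdeg : (ascPochhammer ℂ n).degree = (n : WithBot ℕ) := by
      rw [degree_eq_natDegree hmon.ne_zero, ascPochhammer_natDegree]
    have hdeg : (C a * ascPochhammer ℂ n).degree = p.degree := by
      rw [degree_C_mul ha0, hpochdeg, degree_eq_natDegree hp, hn]
    have hlc : p.leadingCoeff = (C a * ascPochhammer ℂ n).leadingCoeff := by
      rw [leadingCoeff_mul' (by simp [hmon.leadingCoeff, ha0]), hmon.leadingCoeff,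
        leadingCoeff_C, mul_one]
    set r : ℂ[X] := p - C a * ascPochhammer ℂ n with hr
    by_cases hr0 : r = 0
    · refine ⟨C (a / ((n : ℂ) + 1)) * ascPochhammer ℂ (n + 1), ?_⟩
      rw [hd1]
      exact (sub_eq_zero.mp hr0).symm
    · have hrdeg : r.degree < p.degree := degree_sub_lt hdeg.symm hp hlc
      have hrn : r.natDegree < n := by
        rw [← hn]; exact natDegree_lt_natDegree hr0 hrdeg
      obtain ⟨g₂, hg₂⟩ := ih r.natDegree hrn r hr0 rfl
      refine ⟨C (a / ((n : ℂ) + 1)) * ascPochhammer ℂ (n + 1) + g₂, ?_⟩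
      rw [add_comp]
      have : C (a / ((n : ℂ) + 1)) * ascPochhammer ℂ (n + 1) + g₂
            - ((C (a / ((n : ℂ) + 1)) * ascPochhammer ℂ (n + 1)).comp (X - C 1) + g₂.comp (X - C 1))
          = (C (a / ((n : ℂ) + 1)) * ascPochhammer ℂ (n + 1)
            - (C (a / ((n : ℂ) + 1)) * ascPochhammer ℂ (n + 1)).comp (X - C 1))
            + (g₂ - g₂.comp (X - C 1)) := by ring
      rw [this, hd1, hg₂, hr]
      ring

end SmithAux

namespace SmithAux

variable (f : ℂ[X])

local notation "A" => SmithAlgebra f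
local notation "e" => SmithE f
local notation "F" => SmithF f
local notation "h" => SmithH f

lemma rel_ef : e * F = F * e + aeval h f := by
  have := RingQuot.mkAlgHom_rel ℂ (SmithRel.ef (f := f))
  simp only [map_sub, map_mul] at this
  rw [← Polynomial.aeval_algHom_apply] at this
  rw [← SmithE, ← SmithF, ← SmithH] at this
  linear_combination (norm := noncomm_ring) this

lemma rel_he : h * e = e * h + e := by
  have := RingQuot.mkAlgHom_rel ℂ (SmithRel.he (f := f))
  simp only [map_sub, map_mul] at this
  rw [← SmithE, ← SmithH] at this
  linear_combination (norm := noncomm_ring) this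

lemma rel_hf : h * F = F * h - F := by
  have := RingQuot.mkAlgHom_rel ℂ (SmithRel.hf (f := f))
  simp only [map_sub, map_mul, map_neg] at this
  rw [← SmithF, ← SmithH] at this
  linear_combination (norm := noncomm_ring) this

lemma e_hpow (n : ℕ) : e * h ^ n = (h - 1) ^ n * e := by
  induction n with
  | zero => simp
  | succ n ih =>
    have h1 : e * h = (h - 1) * e := by
      rw [sub_mul, one_mul]
      linear_combination (norm := noncomm_ring) - rel_he f
    rw [pow_succ, ← mul_assoc, ih, mul_assoc, h1, pow_succ, ← mul_assoc, mul_assoc]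

lemma f_hpow (n : ℕ) : F * h ^ n = (h + 1) ^ n * F := by
  induction n with
  | zero => simp
  | succ n ih =>
    have h1 : F * h = (h + 1) * F := by
      rw [add_mul, one_mul]
      linear_combination (norm := noncomm_ring) - rel_hf f
    rw [pow_succ, ← mul_assoc, ih, mul_assoc, h1, pow_succ, ← mul_assoc, mul_assoc]

lemma e_aeval (p : ℂ[X]) : e * aeval h p = aeval (h - 1) p * e := by
  induction p using Polynomial.induction_on' with
  | add p q hp hq => simp [map_add, mul_add, add_mul, hp, hq]
  | monomial n a =>
    simp only [aeval_monomial]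
    rw [← mul_assoc, ← Algebra.commutes, mul_assoc, e_hpow, ← mul_assoc]

lemma f_aeval (p : ℂ[X]) : F * aeval h p = aeval (h + 1) p * F := by
  induction p using Polynomial.induction_on' with
  | add p q hp hq => simp [map_add, mul_add, add_mul, hp, hq]
  | monomial n a =>
    simp only [aeval_monomial]
    rw [← mul_assoc, ← Algebra.commutes, mul_assoc, f_hpow, ← mul_assoc]

lemma h_aeval (p : ℂ[X]) : h * aeval h p = aeval h p * h := by
  induction p using Polynomial.induction_on' with
  | add p q hp hq => simp [map_add, mul_add, add_mul, hp, hq]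
  | monomial n a =>
    simp only [aeval_monomial]
    rw [← mul_assoc, ← Algebra.commutes, mul_assoc, mul_assoc, ← pow_succ, ← pow_succ']

lemma aeval_sub_one (p : ℂ[X]) : aeval h (p.comp (X - C 1)) = aeval (h - 1) p := by
  rw [aeval_comp]; simp

lemma aeval_add_one (p : ℂ[X]) : aeval h (p.comp (X + C 1)) = aeval (h + 1) p := by
  rw [aeval_comp]; simp

end SmithAux

namespace SmithAux
variable (f : ℂ[X])
local notation "AA" => SmithAlgebra f
local notation "ee" => SmithE f
local notation "ff" => SmithF f
local notation "hh" => SmithH f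

lemma rel_hf' : hh * ff + ff = ff * hh := by rw [rel_hf]; abel

lemma omega_comm_e (g : ℂ[X]) (hg : g - g.comp (X - C 1) = 2 * f) :
    ee * (2 * ff * ee + aeval hh g) = (2 * ff * ee + aeval hh g) * ee := by
  have key : aeval hh g = 2 * aeval hh f + aeval (hh - 1) g := by
    have h0 : (aeval hh : ℂ[X] →ₐ[ℂ] AA) g - aeval hh (g.comp (X - C 1)) = aeval hh (2 * f) := by
      rw [← map_sub, hg]
    rw [aeval_sub_one, map_mul, map_ofNat] at h0
    exact sub_eq_iff_eq_add.mp h0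
  calc ee * (2 * ff * ee + aeval hh g)
      = 2 * ((ee * ff) * ee) + ee * aeval hh g := by noncomm_ring
    _ = 2 * ((ff * ee + aeval hh f) * ee) + aeval (hh - 1) g * ee := by
        rw [rel_ef, e_aeval]
    _ = 2 * (ff * ee * ee) + (2 * aeval hh f + aeval (hh - 1) g) * ee := by noncomm_ring
    _ = 2 * (ff * ee * ee) + aeval hh g * ee := by rw [← key]
    _ = (2 * ff * ee + aeval hh g) * ee := by noncomm_ring

lemma omega_comm_f (g : ℂ[X]) (hg : g - g.comp (X - C 1) = 2 * f) :
    ff * (2 * ff * ee + aeval hh g) = (2 * ff * ee + aeval hh g) * ff := by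
  have key : aeval (hh + 1) g = 2 * aeval (hh + 1) f + aeval hh g := by
    have h0 : (aeval (hh + 1) : ℂ[X] →ₐ[ℂ] AA) g - aeval (hh + 1) (g.comp (X - C 1))
        = aeval (hh + 1) (2 * f) := by rw [← map_sub, hg]
    rw [aeval_comp, map_mul, map_ofNat] at h0
    simp only [map_sub, aeval_X, aeval_C, map_one, add_sub_cancel_right] at h0
    exact sub_eq_iff_eq_add.mp h0
  calc ff * (2 * ff * ee + aeval hh g)
      = 2 * (ff * (ff * ee)) + ff * aeval hh g := by noncomm_ring
    _ = 2 * (ff * (ff * ee)) + aeval (hh + 1) g * ff := by rw [f_aeval]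
    _ = 2 * (ff * (ff * ee)) + (2 * aeval (hh + 1) f + aeval hh g) * ff := by rw [key]
    _ = 2 * (ff * (ff * ee)) + (2 * (aeval (hh + 1) f * ff) + aeval hh g * ff) := by
        noncomm_ring
    _ = 2 * (ff * (ff * ee)) + (2 * (ff * aeval hh f) + aeval hh g * ff) := by
        rw [← f_aeval]
    _ = 2 * (ff * (ff * ee + aeval hh f)) + aeval hh g * ff := by noncomm_ring
    _ = 2 * (ff * (ee * ff)) + aeval hh g * ff := by rw [← rel_ef]
    _ = (2 * ff * ee + aeval hh g) * ff := by noncomm_ring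

lemma omega_comm_h (g : ℂ[X]) :
    hh * (2 * ff * ee + aeval hh g) = (2 * ff * ee + aeval hh g) * hh := by
  have k1 : hh * (ff * ee) + ff * ee = ff * ee * hh + ff * ee := by
    calc hh * (ff * ee) + ff * ee = (hh * ff + ff) * ee := by noncomm_ring
      _ = (ff * hh) * ee := by rw [rel_hf']
      _ = ff * (hh * ee) := by rw [mul_assoc]
      _ = ff * (ee * hh + ee) := by rw [rel_he]
      _ = ff * ee * hh + ff * ee := by noncomm_ring
  have k2 : hh * (ff * ee) = ff * ee * hh := add_right_cancel k1
  calc hh * (2 * ff * ee + aeval hh g)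
      = 2 * (hh * (ff * ee)) + hh * aeval hh g := by noncomm_ring
    _ = 2 * (ff * ee * hh) + aeval hh g * hh := by rw [k2, h_aeval]
    _ = (2 * ff * ee + aeval hh g) * hh := by noncomm_ring

lemma omega_central (g : ℂ[X]) (hg : g - g.comp (X - C 1) = 2 * f) (r : AA) :
    r * (2 * ff * ee + aeval hh g) = (2 * ff * ee + aeval hh g) * r := by
  obtain ⟨x, rfl⟩ := RingQuot.mkAlgHom_surjective ℂ (SmithRel f) r
  induction x using FreeAlgebra.induction with
  | grade0 a => rw [AlgHom.commutes]; exact Algebra.commutes a _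
  | grade1 x =>
    cases x with
    | E => exact omega_comm_e f g hg
    | F => exact omega_comm_f f g hg
    | H => exact omega_comm_h f g
  | mul a b ha hb => rw [map_mul, mul_assoc, hb, ← mul_assoc, ha, mul_assoc]
  | add a b ha hb => rw [map_add, add_mul, ha, hb, ← mul_add]

lemma omega_pow_central (g : ℂ[X]) (hg : g - g.comp (X - C 1) = 2 * f) (r : AA) (n : ℕ) :
    r * (2 * ff * ee + aeval hh g) ^ n = (2 * ff * ee + aeval hh g) ^ n * r := by
  induction n with
  | zero => simp
  | succ n ih =>
    rw [pow_succ, ← mul_assoc, ih, mul_assoc, omega_central f g hg r, ← mul_assoc]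

lemma omega_aeval_central (g : ℂ[X]) (hg : g - g.comp (X - C 1) = 2 * f) (r : AA) (q : ℂ[X]) :
    r * aeval (2 * ff * ee + aeval hh g) q = aeval (2 * ff * ee + aeval hh g) q * r := by
  induction q using Polynomial.induction_on' with
  | add p q hp hq => rw [map_add, mul_add, hp, hq, ← add_mul]
  | monomial n a =>
    rw [aeval_monomial, ← mul_assoc, ← Algebra.commutes, mul_assoc,
      omega_pow_central f g hg r n, ← mul_assoc]

end SmithAux

namespace SmithAux2
open SmithAux

variable {f : ℂ[X]} {c : ℂ} {V : Type} [AddCommGroup V] [Module (SmithAlgebra f) V]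
  [Module ℂ V] [IsScalarTower ℂ (SmithAlgebra f) V] {w : V}

local notation "AA" => SmithAlgebra f
local notation "ee" => SmithE f
local notation "ff" => SmithF f
local notation "hh" => SmithH f

/-- A polynomial invariant under the shift `X ↦ X - 1` is constant. -/
lemma shift_invariant_natDegree_eq_zero {p : ℂ[X]} (hper : p.comp (X - C 1) = p) :
    p.natDegree = 0 := by
  by_contra hdeg
  have heval : ∀ x : ℂ, p.eval (x - 1) = p.eval x := by
    intro x
    conv_rhs => rw [← hper]
    rw [eval_comp]
    simp
  have hnat : ∀ n : ℕ, p.eval (-(n : ℂ)) = p.eval 0 := by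
    intro n
    induction n with
    | zero => simp
    | succ n ih =>
      have : (-(((n : ℕ) + 1 : ℕ) : ℂ)) = -(n : ℂ) - 1 := by push_cast; ring
      rw [this, heval, ih]
  set r : ℂ[X] := p - C (p.eval 0) with hr
  have hroot : ∀ n : ℕ, r.IsRoot (-(n : ℂ)) := by
    intro n
    simp [hr, IsRoot, hnat n]
  have hinf : {x : ℂ | r.IsRoot x}.Infinite := by
    apply Set.infinite_of_injective_forall_mem (f := fun n : ℕ => -(n : ℂ))
    · intro a b hab
      simpa using neg_injective hab
    · intro n
      exact hroot n
  have hr0 : r = 0 := Polynomial.eq_zero_of_infinite_isRoot r hinf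
  have : p = C (p.eval 0) := by
    have := sub_eq_zero.mp hr0
    exact this
  rw [this] at hdeg
  simp at hdeg

lemma annih (hc : c ≠ 0) (hw' : ee • w = c • w) (hw0 : w ≠ 0) :
    ∀ p : ℂ[X], aeval hh p • w = 0 → p = 0 := by
  intro p hp
  generalize hn : p.natDegree = n
  induction n using Nat.strong_induction_on generalizing p with
  | _ n ih =>
    -- first, the shifted polynomial also annihilates
    have hshift : aeval hh (p.comp (X - C 1)) • w = 0 := by
      have h1 : (ee * aeval hh p) • w = 0 := by rw [mul_smul, hp, smul_zero]
      rw [e_aeval, mul_smul, hw', smul_comm, smul_eq_zero] at h1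
      rcases h1 with h1 | h1
      · exact absurd h1 hc
      · rw [aeval_sub_one]
        exact h1
    rcases Nat.eq_zero_or_pos n with hn0 | hnpos
    · -- constant case
      rw [hn0] at hn
      obtain ⟨a, rfl⟩ : ∃ a, p = C a := ⟨p.coeff 0, Polynomial.eq_C_of_natDegree_eq_zero hn⟩
      rw [aeval_C, algebraMap_smul, smul_eq_zero] at hp
      rcases hp with hp | hp
      · rw [hp, map_zero]
      · exact absurd hp hw0
    · by_cases hp0 : p = 0
      · exact hp0
      -- the difference has smaller degree
      set q : ℂ[X] := p - p.comp (X - C 1) with hq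
      have hqann : aeval hh q • w = 0 := by
        rw [hq, map_sub, sub_smul, hp, hshift, sub_zero]
      have hq0 : q = 0 := by
        by_cases hq0 : q = 0
        · exact hq0
        · have hlceq : p.leadingCoeff = (p.comp (X - C 1)).leadingCoeff := by
            rw [leadingCoeff_comp (by rw [natDegree_X_sub_C]; exact one_ne_zero)]
            rw [(monic_X_sub_C (1 : ℂ)).leadingCoeff, one_pow, mul_one]
          have hcomp0 : p.comp (X - C 1) ≠ 0 := by
            intro h0
            rw [h0, leadingCoeff_zero] at hlceq
            exact hp0 (leadingCoeff_eq_zero.mp hlceq)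
          have hdegeq : (p.comp (X - C 1)).degree = p.degree := by
            rw [degree_eq_natDegree hcomp0, degree_eq_natDegree hp0, natDegree_comp,
              natDegree_X_sub_C, mul_one]
          have hdlt : q.degree < p.degree := degree_sub_lt hdegeq.symm hp0 hlceq
          have hnlt : q.natDegree < n := by
            rw [← hn]
            exact natDegree_lt_natDegree hq0 hdlt
          exact ih q.natDegree hnlt q hqann rfl
      have hper : p.comp (X - C 1) = p := by
        have := sub_eq_zero.mp hq0
        exact this.symm
      have := shift_invariant_natDegree_eq_zero hper
      omega

end SmithAux2

deriving instance DecidableEq for SmithGen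

instance : Fintype SmithGen :=
  ⟨⟨{SmithGen.E, SmithGen.F, SmithGen.H}, by decide⟩, by intro x; cases x <;> decide⟩

instance : Nonempty SmithGen := ⟨SmithGen.E⟩

namespace SmithAux2
open SmithAux

variable {f : ℂ[X]} {c : ℂ} {V : Type} [AddCommGroup V] [Module (SmithAlgebra f) V]
  [Module ℂ V] [IsScalarTower ℂ (SmithAlgebra f) V] {w : V}

local notation "AA" => SmithAlgebra f
local notation "ee" => SmithE f
local notation "ff" => SmithF f
local notation "hh" => SmithH f

lemma lin_indep (hc : c ≠ 0) (hw' : ee • w = c • w) (hw0 : w ≠ 0) :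
    LinearIndependent ℂ (fun i : ℕ => hh ^ i • w) := by
  have key : LinearIndependent ℂ fun n : ℕ => ((Algebra.lsmul ℂ ℂ V hh) ^ n) w := by
    rw [Polynomial.linearIndependent_powers_iff_aeval]
    intro p hp
    refine annih hc hw' hw0 p ?_
    have h2 := Polynomial.aeval_algHom_apply (Algebra.lsmul ℂ ℂ V) hh p
    have h3 : ((aeval ((Algebra.lsmul ℂ ℂ V) hh)) p) w
        = ((Algebra.lsmul ℂ ℂ V) ((aeval hh) p)) w := by rw [h2]
    rw [hp] at h3
    exact h3.symm
  have heq : (fun n : ℕ => ((Algebra.lsmul ℂ ℂ V hh) ^ n) w) = fun i : ℕ => hh ^ i • w := by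
    funext i
    rw [← map_pow]
    rfl
  rwa [heq] at key

lemma rank_le_aleph0 (hcyc : ∀ v : V, ∃ r : AA, v = r • w) :
    Module.rank ℂ V ≤ Cardinal.aleph0 := by
  let L : FreeAlgebra ℂ SmithGen →ₗ[ℂ] V :=
    { toFun := fun x => (RingQuot.mkAlgHom ℂ (SmithRel f) x) • w
      map_add' := by intro x y; simp only [map_add, add_smul]
      map_smul' := by intro a x; simp only [map_smul, RingHom.id_apply, smul_assoc] }
  have hsurj : Function.Surjective L := by
    intro v
    obtain ⟨r, hr⟩ := hcyc v
    obtain ⟨x, hx⟩ := RingQuot.mkAlgHom_surjective ℂ (SmithRel f) r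
    exact ⟨x, by simp only [L, LinearMap.coe_mk, AddHom.coe_mk, hx, ← hr]⟩
  have h1 : Module.rank ℂ V ≤ Module.rank ℂ (FreeAlgebra ℂ SmithGen) :=
    LinearMap.rank_le_of_surjective L hsurj
  rw [FreeAlgebra.rank_eq] at h1
  rwa [Cardinal.mk_list_eq_aleph0, Cardinal.lift_aleph0] at h1

end SmithAux2

namespace SmithAux2
open SmithAux

variable {f : ℂ[X]} {c : ℂ} {V : Type} [AddCommGroup V] [Module (SmithAlgebra f) V]
  [Module ℂ V] [IsScalarTower ℂ (SmithAlgebra f) V] {w : V}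

local notation "AA" => SmithAlgebra f
local notation "ee" => SmithE f
local notation "ff" => SmithF f
local notation "hh" => SmithH f

/-- Action of a polynomial in the Casimir element, as an `AA`-linear endomorphism. -/
noncomputable def Tmap (V : Type) [AddCommGroup V] [Module (SmithAlgebra f) V]
    {g : ℂ[X]} (hg : g - g.comp (X - C 1) = 2 * f) (q : ℂ[X]) : V →ₗ[SmithAlgebra f] V where
  toFun := fun v => aeval (2 * ff * ee + aeval hh g) q • v
  map_add' := fun v₁ v₂ => smul_add _ _ _
  map_smul' := fun r v => by
    simp only [RingHom.id_apply]
    rw [← mul_smul, ← omega_aeval_central f g hg r q, mul_smul]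

lemma Tmap_apply {g : ℂ[X]} (hg : g - g.comp (X - C 1) = 2 * f) (q : ℂ[X]) (v : V) :
    Tmap V hg q v = aeval (2 * ff * ee + aeval hh g) q • v := rfl

lemma exists_ann [IsSimpleModule (SmithAlgebra f) V] {g : ℂ[X]}
    (hg : g - g.comp (X - C 1) = 2 * f)
    (hcyc : ∀ v : V, ∃ r : AA, v = r • w) :
    ∃ p : ℂ[X], p ≠ 0 ∧ aeval (2 * ff * ee + aeval hh g) p • w = 0 := by
  by_contra hcon
  push_neg at hcon
  -- for every λ, the action of ω - λ is surjective, pick preimages of w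
  have hsurj : ∀ lam : ℂ, ∃ u : V, Tmap V hg (X - C lam) u = w := by
    intro lam
    have hne : Tmap V hg (X - C lam) ≠ 0 := by
      intro h0
      have h1 : Tmap V hg (X - C lam) w = 0 := by rw [h0]; rfl
      rw [Tmap_apply] at h1
      exact hcon (X - C lam) (X_sub_C_ne_zero lam) h1
    exact LinearMap.surjective_of_ne_zero hne w
  choose wl hwl using hsurj
  have hwl' : ∀ lam : ℂ, aeval (2 * ff * ee + aeval hh g) (X - C lam) • wl lam = w := by
    intro lam; rw [← Tmap_apply hg]; exact hwl lam
  -- the family wl is linearly independent over ℂ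
  have hind : LinearIndependent ℂ wl := by
    rw [linearIndependent_iff]
    intro l hl
    classical
    set om : AA := 2 * ff * ee + aeval hh g with hom
    set P : ℂ[X] := ∑ lam ∈ l.support, C (l lam) * (∏ μ ∈ l.support.erase lam, (X - C μ))
      with hP
    have hPw : aeval om P • w = 0 := by
      have h0 : aeval om (∏ μ ∈ l.support, (X - C μ)) • Finsupp.linearCombination ℂ wl l
          = 0 := by rw [hl, smul_zero]
      rw [Finsupp.linearCombination_apply, Finsupp.sum, Finset.smul_sum] at h0
      have hterm : ∀ lam ∈ l.support,
          aeval om (∏ μ ∈ l.support, (X - C μ)) • (l lam • wl lam)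
            = (aeval om (C (l lam) * ∏ μ ∈ l.support.erase lam, (X - C μ))) • w := by
        intro lam hlam
        have hsplit : (∏ μ ∈ l.support, (X - C μ))
            = (∏ μ ∈ l.support.erase lam, (X - C μ)) * (X - C lam) :=
          (Finset.prod_erase_mul _ _ hlam).symm
        calc aeval om (∏ μ ∈ l.support, (X - C μ)) • (l lam • wl lam)
            = l lam • (aeval om (∏ μ ∈ l.support, (X - C μ)) • wl lam) := smul_comm _ _ _
          _ = l lam • (aeval om (∏ μ ∈ l.support.erase lam, (X - C μ))
                • (aeval om (X - C lam) • wl lam)) := by rw [hsplit, map_mul, mul_smul]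
          _ = l lam • (aeval om (∏ μ ∈ l.support.erase lam, (X - C μ)) • w) := by
                rw [hwl' lam]
          _ = (aeval om (C (l lam) * ∏ μ ∈ l.support.erase lam, (X - C μ))) • w := by
                rw [map_mul, aeval_C, mul_smul, algebraMap_smul]
      rw [Finset.sum_congr rfl hterm] at h0
      rwa [← Finset.sum_smul, ← map_sum] at h0
    have hP0 : P = 0 := by
      by_contra hP0
      exact hcon P hP0 hPw
    ext lam0
    by_cases hmem : lam0 ∈ l.support
    · have hev : P.eval lam0 = 0 := by rw [hP0, eval_zero]
      rw [hP, eval_finset_sum] at hev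
      simp only [eval_mul, eval_C, eval_prod, eval_sub, eval_X] at hev
      rw [Finset.sum_eq_single lam0
        (fun b hb hbne => by
          rw [Finset.prod_eq_zero (Finset.mem_erase.mpr ⟨hbne.symm, hmem⟩) (sub_self lam0),
            mul_zero])
        (fun hn => absurd hmem hn)] at hev
      have hprod : (∏ μ ∈ l.support.erase lam0, (lam0 - μ)) ≠ 0 := by
        rw [Finset.prod_ne_zero_iff]
        intro μ hμ
        exact sub_ne_zero.mpr (Ne.symm (Finset.mem_erase.mp hμ).1)
      have := mul_eq_zero.mp hev
      simpa [hprod] using this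
    · exact Finsupp.notMem_support_iff.mp hmem
  have hcard := hind.cardinal_le_rank
  rw [Cardinal.mk_complex] at hcard
  have hle := hcard.trans (rank_le_aleph0 hcyc)
  exact absurd hle (by simpa using Cardinal.aleph0_lt_continuum.not_ge)

end SmithAux2

namespace SmithAux2
open SmithAux

variable {f : ℂ[X]} {c : ℂ} {V : Type} [AddCommGroup V] [Module (SmithAlgebra f) V]
  [Module ℂ V] [IsScalarTower ℂ (SmithAlgebra f) V] {w : V}

local notation "AA" => SmithAlgebra f
local notation "ee" => SmithE f
local notation "ff" => SmithF f
local notation "hh" => SmithH f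

lemma exists_eigen [IsSimpleModule (SmithAlgebra f) V] {g : ℂ[X]}
    (hg : g - g.comp (X - C 1) = 2 * f) (hw0 : w ≠ 0)
    (hann : ∃ p : ℂ[X], p ≠ 0 ∧ aeval (2 * ff * ee + aeval hh g) p • w = 0) :
    ∃ ξ : ℂ, ∀ v : V,
      (2 * ff * ee + aeval hh g) • v = algebraMap ℂ (SmithAlgebra f) ξ • v := by
  set om : AA := 2 * ff * ee + aeval hh g with hom
  -- first find an eigenvector
  have key : ∃ ξ : ℂ, ∃ v0 : V, v0 ≠ 0 ∧ aeval om (X - C ξ) • v0 = 0 := by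
    obtain ⟨p, hp0, hpw⟩ := hann
    generalize hn : p.natDegree = n
    induction n using Nat.strong_induction_on generalizing p with
    | _ n ih =>
      rcases Nat.eq_zero_or_pos n with hn0 | hnpos
      · exfalso
        rw [hn0] at hn
        obtain ⟨a, rfl⟩ : ∃ a, p = C a := ⟨p.coeff 0, Polynomial.eq_C_of_natDegree_eq_zero hn⟩
        rw [aeval_C, algebraMap_smul, smul_eq_zero] at hpw
        rcases hpw with h | h
        · exact hp0 (by rw [h, map_zero])
        · exact hw0 h
      · have hdeg : p.degree ≠ 0 := by
          rw [degree_eq_natDegree hp0, hn]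
          exact_mod_cast Nat.pos_iff_ne_zero.mp hnpos ∘ Nat.cast_injective.eq_iff.mp
        obtain ⟨ξ, hroot⟩ := IsAlgClosed.exists_root p hdeg
        obtain ⟨q, hq⟩ := (dvd_iff_isRoot.mpr hroot : X - C ξ ∣ p)
        have hq0 : q ≠ 0 := by rintro rfl; rw [mul_zero] at hq; exact hp0 hq
        by_cases hqw : aeval om q • w = 0
        · have hnq : q.natDegree < n := by
            have : p.natDegree = 1 + q.natDegree := by
              rw [hq, natDegree_mul (X_sub_C_ne_zero ξ) hq0, natDegree_X_sub_C]
            omega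
          exact ih q.natDegree hnq q hq0 hqw rfl
        · refine ⟨ξ, aeval om q • w, hqw, ?_⟩
          rw [← mul_smul, ← map_mul, ← hq, hpw]
  obtain ⟨ξ, v0, hv0, hev⟩ := key
  refine ⟨ξ, fun v => ?_⟩
  have hker : LinearMap.ker (Tmap V hg (X - C ξ)) = ⊤ := by
    rcases eq_bot_or_eq_top (LinearMap.ker (Tmap V hg (X - C ξ))) with hbot | htop
    · exfalso
      have : v0 ∈ LinearMap.ker (Tmap V hg (X - C ξ)) := by
        rw [LinearMap.mem_ker, Tmap_apply]
        exact hev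
      rw [hbot, Submodule.mem_bot] at this
      exact hv0 this
    · exact htop
  have hvk : aeval om (X - C ξ) • v = 0 := by
    have : v ∈ LinearMap.ker (Tmap V hg (X - C ξ)) := by rw [hker]; trivial
    rw [LinearMap.mem_ker, Tmap_apply] at this
    exact this
  rw [map_sub, aeval_X, aeval_C, sub_smul, sub_eq_zero] at hvk
  exact hvk

lemma f_smul_w (hc : c ≠ 0) (hw' : ee • w = c • w) {g : ℂ[X]} {ξ : ℂ}
    (heig : (2 * ff * ee + aeval hh g) • w = algebraMap ℂ (SmithAlgebra f) ξ • w) :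
    ff • w = aeval hh (C (1 / (2 * c)) * (C ξ - g)) • w := by
  have h2c : (2 * c : ℂ) ≠ 0 := by
    simp [hc]
  have h1 : (2 * ff * ee) • w = (2 * c) • (ff • w) := by
    have : (2 : AA) = algebraMap ℂ AA 2 := by
      rw [map_ofNat]
    rw [mul_assoc, this, mul_smul, mul_smul, hw']
    rw [algebraMap_smul, ← smul_comm c ff w, smul_smul]
  have h2 : (2 * c) • (ff • w) = ξ • w - aeval hh g • w := by
    have := heig
    rw [add_smul, h1, algebraMap_smul] at this
    rw [← this]
    abel
  have h3 : ff • w = (1 / (2 * c)) • (ξ • w - aeval hh g • w) := by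
    rw [← h2, smul_smul, one_div, inv_mul_cancel₀ h2c, one_smul]
  rw [h3, map_mul, aeval_C, map_sub, aeval_C, mul_smul, algebraMap_smul, sub_smul,
    algebraMap_smul]

end SmithAux2

namespace SmithAux2
open SmithAux

variable {f : ℂ[X]} {c : ℂ} {V : Type} [AddCommGroup V] [Module (SmithAlgebra f) V]
  [Module ℂ V] [IsScalarTower ℂ (SmithAlgebra f) V] {w : V}

local notation "AA" => SmithAlgebra f
local notation "ee" => SmithE f
local notation "ff" => SmithF f
local notation "hh" => SmithH f

lemma spanned (hw' : ee • w = c • w) {g' : ℂ[X]} (hFw : ff • w = aeval hh g' • w)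
    (hcyc : ∀ v : V, ∃ r : AA, v = r • w) :
    ∀ v : V, ∃ p : ℂ[X], v = aeval hh p • w := by
  have key : ∀ x : FreeAlgebra ℂ SmithGen, ∀ p : ℂ[X],
      ∃ q : ℂ[X], (RingQuot.mkAlgHom ℂ (SmithRel f) x) • (aeval hh p • w)
        = aeval hh q • w := by
    intro x
    induction x using FreeAlgebra.induction with
    | grade0 a =>
      intro p
      refine ⟨C a * p, ?_⟩
      rw [AlgHom.commutes, map_mul, aeval_C, mul_smul, algebraMap_smul]
    | grade1 x =>
      cases x with
      | E =>
        intro p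
        refine ⟨C c * p.comp (X - C 1), ?_⟩
        rw [← SmithE, ← mul_smul, e_aeval, mul_smul, hw', map_mul, aeval_C, aeval_sub_one,
          mul_smul, algebraMap_smul, smul_comm]
      | F =>
        intro p
        refine ⟨p.comp (X + C 1) * g', ?_⟩
        rw [← SmithF, ← mul_smul, f_aeval, mul_smul, hFw, map_mul, aeval_add_one, ← mul_smul]
      | H =>
        intro p
        refine ⟨X * p, ?_⟩
        rw [← SmithH, map_mul, aeval_X, ← mul_smul]
    | mul a b ha hb =>
      intro p
      obtain ⟨q₁, hq₁⟩ := hb p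
      obtain ⟨q₂, hq₂⟩ := ha q₁
      refine ⟨q₂, ?_⟩
      rw [map_mul, mul_smul, hq₁, hq₂]
    | add a b ha hb =>
      intro p
      obtain ⟨q₁, hq₁⟩ := ha p
      obtain ⟨q₂, hq₂⟩ := hb p
      refine ⟨q₁ + q₂, ?_⟩
      rw [map_add, add_smul, hq₁, hq₂, map_add, add_smul]
  intro v
  obtain ⟨r, rfl⟩ := hcyc v
  obtain ⟨x, rfl⟩ := RingQuot.mkAlgHom_surjective ℂ (SmithRel f) r
  obtain ⟨q, hq⟩ := key x 1
  refine ⟨q, ?_⟩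
  rw [← hq, map_one, one_smul]

end SmithAux2


open SmithAux SmithAux2 in
/-- For an irreducible Whittaker module `(V, w)`, the family `{Hⁱ·w : i ≥ 0}` is a
`ℂ`-vector space basis of `V`. -/
theorem smith_irreducible_whittaker_basis (f : ℂ[X]) (c : ℂ) (hc : c ≠ 0)
    (V : Type) [AddCommGroup V] [Module (SmithAlgebra f) V]
    [Module ℂ V] [IsScalarTower ℂ (SmithAlgebra f) V] (w : V)
    (hw : SmithE f • w = algebraMap ℂ (SmithAlgebra f) c • w)
    (hcyc : ∀ v : V, ∃ r : SmithAlgebra f, v = r • w)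
    (hirr : IsSimpleModule (SmithAlgebra f) V) :
    ∃ b : Module.Basis ℕ ℂ V, ∀ i : ℕ, b i = (SmithH f ^ i) • w := by

  haveI := hirr
  obtain ⟨g, hg⟩ := exists_delta (2 * f)
  have hw0 : w ≠ 0 := by
    intro h0
    haveI : Nontrivial V := IsSimpleModule.nontrivial (R := SmithAlgebra f) (M := V)
    obtain ⟨v, hv⟩ := exists_ne (0 : V)
    obtain ⟨r, hr⟩ := hcyc v
    rw [h0, smul_zero] at hr
    exact hv hr
  have hwc : SmithE f • w = c • w := by rw [hw, algebraMap_smul]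
  have hann := exists_ann (w := w) hg hcyc
  obtain ⟨ξ, heig⟩ := exists_eigen (w := w) hg hw0 hann
  have hFw := f_smul_w hc hwc (heig w)
  have hspan := spanned hwc hFw hcyc
  have hind := lin_indep hc hwc hw0
  have hspantop : ⊤ ≤ Submodule.span ℂ (Set.range fun i : ℕ => SmithH f ^ i • w) := by
    intro v hv
    obtain ⟨p, rfl⟩ := hspan v
    clear hv
    induction p using Polynomial.induction_on' with
    | add p q hp hq =>
      rw [map_add, add_smul]
      exact Submodule.add_mem _ hp hq
    | monomial n a =>
      rw [aeval_monomial, mul_smul, algebraMap_smul]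
      exact Submodule.smul_mem _ a (Submodule.subset_span ⟨n, rfl⟩)
  refine ⟨Module.Basis.mk hind hspantop, fun i => ?_⟩
  rw [Module.Basis.mk_apply]
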